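/- Let $d=2m+1\ge 5$, $k\ge d$, and let $j$ satisfy $m+1\le j\le d-1$. Define $A_j=(-1)^{d-1-j}\sum_{i=0}^{d-1-j}(-1)^i\left[\binom{d-1-i}{j}\binom{k-1}{i}+\binom{d-2-i}{j-1}\binom{k-2}{i-1}\right]$. Then $A_j=\binom{k-j-1}{d-j-1}$. -/

import Mathlib

/-- Integer binomial coefficient, zero outside the range `0 ≤ b ≤ a`. -/
def ch (a b : ℤ) : ℤ := if 0 ≤ b ∧ b ≤ a then ((a.toNat).choose b.toNat : ℤ) else 0

/-- For `d = 2m+1 ≥ 5`, `k ≥ d` and `m+1 ≤ j ≤ d-1`,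
`A_j = (-1)^{d-1-j} ∑_{i=0}^{d-1-j} (-1)^i [C(d-1-i,j)C(k-1,i) + C(d-2-i,j-1)C(k-2,i-1)]`
equals `C(k-j-1, d-j-1)`. -/
lemma ch_eq (a b : ℤ) (A B : ℕ) (hA : a = A) (hB : b = B) (h : B ≤ A) :
    ch a b = (A.choose B : ℤ) := by
  subst hA hB
  unfold ch
  rw [if_pos ⟨by positivity, by exact_mod_cast h⟩]
  simp

lemma ch_neg (a b : ℤ) (h : b < 0) : ch a b = 0 := by
  unfold ch; rw [if_neg (by omega)]

def S (a c n : ℕ) : ℤ :=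
  ∑ i ∈ Finset.range (n+1), (-1 : ℤ)^(n-i) * ((a + n - i).choose a) * (c.choose i)

def g (M : ℤ) (n : ℕ) : ℤ :=
  if 0 ≤ M then (M.toNat.choose n : ℤ)
  else (-1)^n * ((((n : ℤ) - M - 1).toNat).choose n : ℤ)

lemma g_zero (M : ℤ) : g M 0 = 1 := by
  unfold g; split <;> simp

lemma g_pascal (M : ℤ) (n : ℕ) : g M (n+1) = g (M-1) (n+1) + g (M-1) n := by
  rcases lt_trichotomy M 0 with h | h | h
  · obtain ⟨t, ht⟩ : ∃ t : ℕ, M = -t := ⟨(-M).toNat, by omega⟩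
    subst ht
    unfold g
    rw [if_neg (by omega), if_neg (by omega), if_neg (by omega)]
    have h1 : (((n+1 : ℕ) : ℤ) - (-(t:ℤ)) - 1).toNat = n + t := by push_cast; omega
    have h2 : (((n+1 : ℕ) : ℤ) - (-(t:ℤ) - 1) - 1).toNat = n + t + 1 := by push_cast; omega
    have h3 : ((n : ℤ) - (-(t:ℤ) - 1) - 1).toNat = n + t := by omega
    rw [h1, h2, h3]
    have hp : (n + t + 1).choose (n + 1) = (n + t).choose n + (n + t).choose (n + 1) :=
      Nat.choose_succ_succ (n + t) n
    rw [hp]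
    push_cast
    ring
  · subst h
    unfold g
    rw [if_pos le_rfl, if_neg (by omega), if_neg (by omega)]
    have h2 : (((n+1 : ℕ) : ℤ) - (0 - 1) - 1).toNat = n + 1 := by push_cast; omega
    have h3 : ((n : ℤ) - (0 - 1) - 1).toNat = n := by omega
    rw [h2, h3]
    simp [Nat.choose_self, Nat.choose_eq_zero_of_lt (Nat.succ_pos n)]
    ring
  · unfold g
    rw [if_pos (by omega), if_pos (by omega), if_pos (by omega)]
    have h1 : M.toNat = (M-1).toNat + 1 := by omega
    rw [h1, Nat.choose_succ_succ]
    push_cast; ring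

lemma S_zero (a c : ℕ) : S a c 0 = 1 := by
  simp [S]

lemma S_rec (a c N : ℕ) : S a (c+1) (N+1) = S a c N + S a c (N+1) := by
  unfold S
  rw [Finset.sum_range_succ'
        (fun i => (-1:ℤ)^(N+1-i) * ((a + (N+1) - i).choose a) * ((c+1).choose i)) (N+1),
      Finset.sum_range_succ'
        (fun i => (-1:ℤ)^(N+1-i) * ((a + (N+1) - i).choose a) * (c.choose i)) (N+1)]
  simp only [Nat.succ_sub_succ, Nat.sub_zero, Nat.choose_zero_right, Nat.add_succ,
    Nat.choose_succ_succ, Nat.cast_add, Nat.cast_one]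
  simp only [Nat.add_zero, mul_add, Finset.sum_add_distrib]
  ring

lemma S_eq_g : ∀ n a c, S a c n = g ((c:ℤ) - a - 1) n := by
  intro n
  induction n with
  | zero => intro a c; rw [S_zero, g_zero]
  | succ n ih =>
    intro a c
    induction c with
    | zero =>
      unfold S g
      rw [if_neg (by omega)]
      rw [Finset.sum_eq_single 0]
      · have h1 : (((n+1 : ℕ) : ℤ) - ((0:ℕ) - (a:ℤ) - 1) - 1).toNat = a + n + 1 := by
          push_cast; omega
        have h2 : (a + (n+1) - 0).choose a = (a + n + 1).choose (n + 1) := by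
          rw [Nat.sub_zero]
          rw [show a + (n+1) = a + n + 1 by ring]
          rw [← Nat.choose_symm (by omega : a ≤ a + n + 1)]
          congr 1; omega
        rw [h1, h2]
        simp
      · intro b _ hb
        have : Nat.choose 0 b = 0 := Nat.choose_eq_zero_of_lt (by omega)
        simp [this]
      · intro h; simp at h
    | succ c ihc =>
      rw [S_rec, ih a c, ihc]
      have := g_pascal (((c:ℤ)+1) - a - 1) n
      have e1 : (((c+1 : ℕ)):ℤ) - a - 1 = ((c:ℤ)+1) - a - 1 := by push_cast; ring
      have e2 : ((c:ℤ)+1) - a - 1 - 1 = (c:ℤ) - a - 1 := by ring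
      rw [e1, this, e2]
      ring

lemma neg_one_pow_sub {i n : ℕ} (h : i ≤ n) : (-1:ℤ)^(n-i) = (-1)^n * (-1)^i := by
  have hn : n - i + i = n := Nat.sub_add_cancel h
  calc (-1:ℤ)^(n-i) = (-1)^(n-i) * ((-1)^i * (-1)^i) := by
        rw [← pow_add]; rw [Even.neg_one_pow ⟨i, rfl⟩]; ring
    _ = ((-1)^(n-i) * (-1)^i) * (-1)^i := by ring
    _ = (-1)^n * (-1)^i := by rw [← pow_add, hn]

/-- For `d = 2m+1 ≥ 5`, `k ≥ d` and `m+1 ≤ j ≤ d-1`,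
`A_j = (-1)^{d-1-j} ∑_{i=0}^{d-1-j} (-1)^i [C(d-1-i,j)C(k-1,i) + C(d-2-i,j-1)C(k-2,i-1)]`
equals `C(k-j-1, d-j-1)`. -/
theorem A_coefficient (d m k j : ℕ) (hd : d = 2 * m + 1) (hd5 : 5 ≤ d)
    (hk : d ≤ k) (hj1 : m + 1 ≤ j) (hj2 : j ≤ d - 1) :
    (-1 : ℤ) ^ (d - 1 - j) *
        ∑ i ∈ Finset.range (d - j),
          (-1 : ℤ) ^ i *
            (ch ((d : ℤ) - 1 - i) (j : ℤ) * ch ((k : ℤ) - 1) (i : ℤ) +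
              ch ((d : ℤ) - 2 - i) ((j : ℤ) - 1) * ch ((k : ℤ) - 2) ((i : ℤ) - 1))
      = ch ((k : ℤ) - j - 1) ((d : ℤ) - j - 1) := by
  have hm2 : 2 ≤ m := by omega
  have hj3 : 3 ≤ j := by omega
  obtain ⟨n, hdj⟩ : ∃ n, d = j + n + 1 := ⟨d - j - 1, by omega⟩
  have h1 : d - 1 - j = n := by omega
  have h2 : d - j = n + 1 := by omega
  rw [h1, h2]
  have hRHS : ch ((k:ℤ) - j - 1) ((d:ℤ) - j - 1) = ((k - j - 1).choose n : ℤ) :=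
    ch_eq _ _ (k - j - 1) n (by omega) (by omega) (by omega)
  rw [hRHS]
  have key : ∑ i ∈ Finset.range (n+1),
      (-1 : ℤ) ^ i *
        (ch ((d : ℤ) - 1 - i) (j : ℤ) * ch ((k : ℤ) - 1) (i : ℤ) +
          ch ((d : ℤ) - 2 - i) ((j : ℤ) - 1) * ch ((k : ℤ) - 2) ((i : ℤ) - 1))
    = ∑ i ∈ Finset.range (n+1),
      ((-1:ℤ)^i * (((j + n - i).choose j : ℤ) * ((k-1).choose i : ℤ))
        + (if i = 0 then 0 else
            (-1:ℤ)^i * (((j - 1 + (n - i)).choose (j-1) : ℤ) * ((k-2).choose (i-1) : ℤ)))) := by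
    apply Finset.sum_congr rfl
    intro i hi
    have hi' : i ≤ n := by simpa [Finset.mem_range, Nat.lt_succ_iff] using hi
    rw [ch_eq ((d:ℤ)-1-i) (j:ℤ) (j + n - i) j (by omega) rfl (by omega),
        ch_eq ((k:ℤ)-1) (i:ℤ) (k-1) i (by omega) rfl (by omega),
        ch_eq ((d:ℤ)-2-i) ((j:ℤ)-1) (j - 1 + (n - i)) (j-1) (by omega) (by omega) (by omega)]
    by_cases h0 : i = 0
    · subst h0
      rw [ch_neg _ _ (by norm_num), if_pos rfl]
      ring
    · rw [ch_eq ((k:ℤ)-2) ((i:ℤ)-1) (k-2) (i-1) (by omega) (by omega) (by omega), if_neg h0]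
      ring
  rw [key, Finset.sum_add_distrib, mul_add]
  have claimA : (-1:ℤ)^n * ∑ i ∈ Finset.range (n+1),
      (-1:ℤ)^i * (((j + n - i).choose j : ℤ) * ((k-1).choose i : ℤ)) = S j (k-1) n := by
    rw [Finset.mul_sum]
    unfold S
    apply Finset.sum_congr rfl
    intro i hi
    have hi' : i ≤ n := by simpa [Finset.mem_range, Nat.lt_succ_iff] using hi
    rw [neg_one_pow_sub hi']
    ring
  rw [claimA]
  rcases Nat.eq_zero_or_pos n with hn0 | hnpos
  · subst hn0
    rw [S_zero]
    simp
  · obtain ⟨nn, rfl⟩ : ∃ nn, n = nn + 1 := ⟨n - 1, by omega⟩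
    have claimB : (-1:ℤ)^(nn+1) * ∑ i ∈ Finset.range (nn+2),
        (if i = 0 then 0 else
          (-1:ℤ)^i * (((j - 1 + (nn + 1 - i)).choose (j-1) : ℤ) * ((k-2).choose (i-1) : ℤ)))
        = S (j-1) (k-2) nn := by
      rw [Finset.sum_range_succ'
        (fun i => (if i = 0 then 0 else
          (-1:ℤ)^i * (((j - 1 + (nn + 1 - i)).choose (j-1) : ℤ) * ((k-2).choose (i-1) : ℤ))))
        (nn+1)]
      simp only [if_neg (Nat.succ_ne_zero _), eq_self_iff_true, if_true, add_zero,
        Nat.succ_sub_succ, Nat.succ_sub_one, Nat.sub_zero]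
      rw [Finset.mul_sum]
      unfold S
      apply Finset.sum_congr rfl
      intro t ht
      have ht' : t ≤ nn := by simpa [Finset.mem_range, Nat.lt_succ_iff] using ht
      rw [show j - 1 + (nn - t) = j - 1 + nn - t from by omega]
      rw [neg_one_pow_sub ht', pow_succ, pow_succ]
      ring
    rw [claimB, S_eq_g, S_eq_g]
    rw [show ((k-1 : ℕ):ℤ) - (j:ℕ) - 1 = ((k - j - 2 : ℕ) : ℤ) from by omega,
        show ((k-2 : ℕ):ℤ) - ((j-1:ℕ):ℤ) - 1 = ((k - j - 2 : ℕ) : ℤ) from by omega]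
    have g_natCast : ∀ (a n : ℕ), g (a:ℤ) n = (a.choose n : ℤ) := by
      intro a n
      unfold g
      rw [if_pos (by positivity)]
      simp
    rw [g_natCast, g_natCast]
    rw [show k - j - 1 = (k - j - 2) + 1 from by omega, Nat.choose_succ_succ]
    push_cast
    ring
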